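/- Let $T$ be a finite set with true clustering $T^*$, let $\eta \in (0,1/2]$, $p \in (0,1/2)$ with $\eta \ge 1/4$, and $s_t > 0$. Suppose $\tilde{T}$ is a clustering of $T$ containing two distinct clusters $\tilde{T}_i \ne \tilde{T}_j$, both of size greater than $s_t/2$, such that for some true cluster $V_\ell^*$, both $\tilde{T}_i$ and $\tilde{T}_j$ are $(\eta, V_\ell^*)$-biased sets. Then $d(\tilde{T}, T^*) > s_t^2/16$. -/

import Mathlib

open Finset

/-- Number of unordered pairs (u<v) on which two clusterings (given by label
functions `f`, `g`) disagree. -/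
def disag (n : ℕ) (f g : Fin n → ℕ) : ℕ :=
  (Finset.univ.filter (fun e : Fin n × Fin n =>
    e.1 < e.2 ∧ ¬((f e.1 = f e.2) ↔ (g e.1 = g e.2)))).card

/-- if two distinct clusters `T̃_{b₁}, T̃_{b₂}` of `ttil`, both of
size `> s_t/2`, are both `(η, V*_ℓ)`-biased for the same true cluster `V*_ℓ`
(with `η ≥ 1/4`), then `d(ttil, tstar) > s_t²/16`. -/
theorem stmt5 (n : ℕ) (p η st : ℝ) (hp : 0 < p ∧ p < 1/2)
    (hη : 0 < η ∧ η ≤ 1/2) (hη4 : 1/4 ≤ η) (hst : 0 < st)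
    (tstar ttil : Fin n → ℕ) (b₁ b₂ ℓ : ℕ) (hb : b₁ ≠ b₂)
    (hbig₁ : st / 2 < ((Finset.univ.filter (fun v => ttil v = b₁)).card : ℝ))
    (hbig₂ : st / 2 < ((Finset.univ.filter (fun v => ttil v = b₂)).card : ℝ))
    (hbias₁ : (1/2 + η) * ((Finset.univ.filter (fun v => ttil v = b₁)).card : ℝ)
      ≤ ((Finset.univ.filter (fun v => ttil v = b₁ ∧ tstar v = ℓ)).card : ℝ))
    (hbias₂ : (1/2 + η) * ((Finset.univ.filter (fun v => ttil v = b₂)).card : ℝ)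
      ≤ ((Finset.univ.filter (fun v => ttil v = b₂ ∧ tstar v = ℓ)).card : ℝ)) :
    st ^ 2 / 16 < (disag n ttil tstar : ℝ) := by
  classical
  set A := Finset.univ.filter (fun v => ttil v = b₁ ∧ tstar v = ℓ) with hA
  set B := Finset.univ.filter (fun v => ttil v = b₂ ∧ tstar v = ℓ) with hB
  set S := Finset.univ.filter (fun e : Fin n × Fin n =>
    e.1 < e.2 ∧ ¬((ttil e.1 = ttil e.2) ↔ (tstar e.1 = tstar e.2))) with hS
  have hmemA : ∀ v ∈ A, ttil v = b₁ ∧ tstar v = ℓ := by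
    intro v hv; simpa [hA] using hv
  have hmemB : ∀ v ∈ B, ttil v = b₂ ∧ tstar v = ℓ := by
    intro v hv; simpa [hB] using hv
  have key : (A ×ˢ B).card ≤ S.card := by
    apply Finset.card_le_card_of_injOn
      (fun e => if e.1 < e.2 then e else (e.2, e.1))
    · intro e he
      rw [Finset.mem_coe, Finset.mem_product] at he
      rw [Finset.mem_coe]
      obtain ⟨h1a, h1ℓ⟩ := hmemA _ he.1
      obtain ⟨h2b, h2ℓ⟩ := hmemB _ he.2
      have hne : e.1 ≠ e.2 := by
        intro h; apply hb; rw [← h1a, ← h2b, h]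
      have hdis : ¬((ttil e.1 = ttil e.2) ↔ (tstar e.1 = tstar e.2)) := by
        simp [h1a, h2b, h1ℓ, h2ℓ, hb]
      by_cases hlt : e.1 < e.2
      · simp only [hS, Finset.mem_filter, Finset.mem_univ, true_and]
        rw [if_pos hlt]; exact ⟨hlt, hdis⟩
      · have hlt' : e.2 < e.1 := lt_of_le_of_ne (not_lt.mp hlt) hne.symm
        simp only [hS, Finset.mem_filter, Finset.mem_univ, true_and]
        rw [if_neg hlt]
        refine ⟨hlt', fun h => hdis ?_⟩
        constructor
        · intro hh; exact (h.mp hh.symm).symm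
        · intro hh; exact (h.mpr hh.symm).symm
    · intro e he e' he' heq
      rw [Finset.mem_coe, Finset.mem_product] at he he'
      have hAB : ∀ x, x ∈ A → x ∈ B → False := by
        intro x hx hx'
        exact hb (by rw [← (hmemA x hx).1, ← (hmemB x hx').1])
      by_cases h1 : e.1 < e.2 <;> by_cases h2 : e'.1 < e'.2 <;>
        simp only [h1, h2, if_pos, if_neg, if_true, if_false] at heq
      · exact heq
      · have : e.1 = e'.2 := congrArg Prod.fst heq
        exact absurd (this ▸ he.1) (fun h => hAB _ h he'.2)
      · have : e.2 = e'.1 := congrArg Prod.fst heq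
        exact absurd (this ▸ he.2) (fun h => hAB _ he'.1 h)
      · have h1' : e.2 = e'.2 := congrArg Prod.fst heq
        have h2' : e.1 = e'.1 := congrArg Prod.snd heq
        exact Prod.ext h2' h1'
  have hAcard : st / 4 < (A.card : ℝ) := by
    have h34 : (3/4 : ℝ) * ((Finset.univ.filter (fun v => ttil v = b₁)).card : ℝ)
        ≤ (A.card : ℝ) := le_trans (by nlinarith [hbig₁]) hbias₁
    nlinarith [hbig₁]
  have hBcard : st / 4 < (B.card : ℝ) := by
    have h34 : (3/4 : ℝ) * ((Finset.univ.filter (fun v => ttil v = b₂)).card : ℝ)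
        ≤ (B.card : ℝ) := le_trans (by nlinarith [hbig₂]) hbias₂
    nlinarith [hbig₂]
  have hcard : (A.card : ℝ) * (B.card : ℝ) ≤ (disag n ttil tstar : ℝ) := by
    have : (A ×ˢ B).card = A.card * B.card := Finset.card_product A B
    have h2 : (A.card * B.card : ℕ) ≤ disag n ttil tstar := by
      rw [← this]; exact key
    exact_mod_cast h2
  nlinarith [hAcard, hBcard, hst]
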